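/- arXiv:1807.03495 — 3 statements merged into one kernel-verified Lean document; each statement's English description precedes it below -/
import Mathlib

section
/- Let $n \ge 3$ be an integer, let $\varepsilon \ge 1$ be a real number, let $k \ge 1$ be an integer, and let $p \in (0,1)$. Let $X$ be a binomially distributed random variable with $k$ trials and success probability $p$. Then $\Pr\big[X \ge kp + s(\varepsilon, kp)\big] \le n^{-\varepsilon/3}$. -/
open MeasureTheory ProbabilityTheory

/-- The significance threshold `s(ε, μ) = ε · max{√(μ ln n), ln n}` used by the sig-cGA. -/
noncomputable def sigThreshold (n : ℕ) (ε μ : ℝ) : ℝ :=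
  ε * max (Real.sqrt (μ * Real.log n)) (Real.log n)

/-- The probability that a `Bin(k, p)` random variable takes the value `i`. -/
noncomputable def binomialPMF (k : ℕ) (p : ℝ) (i : ℕ) : ℝ :=
  (k.choose i : ℝ) * p ^ i * (1 - p) ^ (k - i)

lemma aux_log_ineq (x : ℝ) (hx : 0 ≤ x) : 2*x/(2+x) ≤ Real.log (1+x) := by
  have key : MonotoneOn (fun x : ℝ => Real.log (1+x) - 2*x/(2+x)) (Set.Ici 0) := by
    apply monotoneOn_of_deriv_nonneg (convex_Ici 0)
    · apply ContinuousOn.sub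
      · exact (Real.continuousOn_log.comp (by fun_prop)
          (fun y hy => by simp at hy ⊢; nlinarith [hy]))
      · apply ContinuousOn.div (by fun_prop) (by fun_prop)
        intro y hy; simp at hy; nlinarith
    · apply DifferentiableOn.sub
      · apply DifferentiableOn.log (by fun_prop)
        intro y hy
        rw [interior_Ici] at hy
        simp at hy; nlinarith
      · apply DifferentiableOn.div (by fun_prop) (by fun_prop)
        intro y hy
        rw [interior_Ici] at hy; simp at hy; nlinarith
    · intro y hy
      rw [interior_Ici] at hy
      simp only [Set.mem_Ioi] at hy
      have h1 : HasDerivAt (fun x : ℝ => 1 + x) 1 y := by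
        simpa using (hasDerivAt_id y).const_add 1
      have h2 : HasDerivAt (fun x : ℝ => Real.log (1+x)) (1/(1+y)) y :=
        h1.log (by nlinarith)
      have h3 : HasDerivAt (fun x : ℝ => 2*x) 2 y := by
        simpa using (hasDerivAt_id y).const_mul 2
      have h4 : HasDerivAt (fun x : ℝ => 2+x) 1 y := by
        simpa using (hasDerivAt_id y).const_add 2
      have h5 : HasDerivAt (fun x : ℝ => 2*x/(2+x)) ((2*(2+y) - 2*y*1)/(2+y)^2) y :=
        h3.div h4 (by nlinarith)
      have h6 : deriv (fun x : ℝ => Real.log (1+x) - 2*x/(2+x)) y = _ := (h2.sub h5).deriv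
      rw [h6]
      rw [div_sub_div _ _ (by nlinarith : (1:ℝ)+y ≠ 0) (by positivity : ((2:ℝ)+y)^2 ≠ 0)]
      apply div_nonneg _ (by positivity)
      ring_nf
      nlinarith
  have h0 := key (Set.self_mem_Ici) (Set.mem_Ici.mpr hx) hx
  simp at h0
  linarith

lemma pmf_nonneg (k : ℕ) (p : ℝ) (hp0 : 0 < p) (hp1 : p < 1) (i : ℕ) :
    0 ≤ binomialPMF k p i := by
  have h1 : (0:ℝ) ≤ 1 - p := by linarith
  unfold binomialPMF
  have := hp0.le
  positivity

lemma tail_eq_sum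
    (k : ℕ) (p : ℝ) (hp0 : 0 < p) (hp1 : p < 1)
    (Ω : Type*) [MeasurableSpace Ω] (P : Measure Ω) [IsProbabilityMeasure P]
    (X : Ω → ℕ) (hmeas : Measurable X)
    (hX : ∀ i : ℕ, P {ω | X ω = i} = ENNReal.ofReal (binomialPMF k p i))
    (a : ℝ) :
    (P {ω | a ≤ (X ω : ℝ)}).toReal
      = ∑ j ∈ Finset.range (k+1), binomialPMF k p (⌈a⌉₊ + j) := by
  set m := ⌈a⌉₊ with hm
  have hset : {ω | a ≤ (X ω : ℝ)} = ⋃ j : ℕ, {ω | X ω = m + j} := by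
    ext ω
    simp only [Set.mem_setOf_eq, Set.mem_iUnion]
    constructor
    · intro h
      have : m ≤ X ω := Nat.ceil_le.mpr h
      exact ⟨X ω - m, by omega⟩
    · rintro ⟨j, hj⟩
      have : m ≤ X ω := by omega
      exact le_trans (Nat.le_ceil a) (by exact_mod_cast this)
  rw [hset, measure_iUnion]
  · have hzero : ∀ j ∉ Finset.range (k+1),
        ENNReal.ofReal (binomialPMF k p (m + j)) = 0 := by
      intro j hj
      simp only [Finset.mem_range, not_lt] at hj
      have : k < m + j := by omega
      rw [binomialPMF, Nat.choose_eq_zero_of_lt this]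
      simp
    calc (∑' j : ℕ, P {ω | X ω = m + j}).toReal
        = (∑' j : ℕ, ENNReal.ofReal (binomialPMF k p (m + j))).toReal := by
          congr 1; exact tsum_congr fun j => hX (m+j)
      _ = (∑ j ∈ Finset.range (k+1), ENNReal.ofReal (binomialPMF k p (m + j))).toReal := by
          rw [tsum_eq_sum hzero]
      _ = ∑ j ∈ Finset.range (k+1), binomialPMF k p (m + j) := by
          rw [ENNReal.toReal_sum (by intro j _; exact ENNReal.ofReal_ne_top)]
          exact Finset.sum_congr rfl fun j _ =>
            ENNReal.toReal_ofReal (pmf_nonneg k p hp0 hp1 _)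
  · intro i j hij
    simp only [Function.onFun, Set.disjoint_left]
    intro ω h1 h2
    simp only [Set.mem_setOf_eq] at h1 h2
    omega
  · intro j
    exact hmeas (measurableSet_singleton (m+j))

lemma chernoff_bound (k : ℕ) (p : ℝ) (hp0 : 0 < p) (hp1 : p < 1)
    (t a : ℝ) (ht : 0 ≤ t) :
    ∑ j ∈ Finset.range (k+1), binomialPMF k p (⌈a⌉₊ + j)
      ≤ Real.exp (-(t*a)) * (1 - p + p * Real.exp t)^k := by
  set m := ⌈a⌉₊ with hm
  set g : ℕ → ℝ := fun i => Real.exp (t*((i:ℝ)-a)) * binomialPMF k p i with hg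
  have hgnn : ∀ i, 0 ≤ g i := fun i =>
    mul_nonneg (Real.exp_nonneg _) (pmf_nonneg k p hp0 hp1 i)
  have step1 : ∑ j ∈ Finset.range (k+1), binomialPMF k p (m + j)
      ≤ ∑ j ∈ Finset.range (k+1), g (m + j) := by
    apply Finset.sum_le_sum
    intro j _
    have h1 : a ≤ ((m + j : ℕ) : ℝ) := by
      have : a ≤ (m : ℝ) := Nat.le_ceil a
      push_cast
      linarith [Nat.cast_nonneg (α := ℝ) j]
    have h2 : (1:ℝ) ≤ Real.exp (t*(((m+j:ℕ):ℝ)-a)) := by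
      rw [← Real.exp_zero]
      exact Real.exp_le_exp.mpr (by nlinarith)
    calc binomialPMF k p (m + j) = 1 * binomialPMF k p (m + j) := (one_mul _).symm
      _ ≤ g (m+j) := by
          exact mul_le_mul_of_nonneg_right h2 (pmf_nonneg k p hp0 hp1 _)
  have step2 : ∑ j ∈ Finset.range (k+1), g (m + j)
      ≤ ∑ i ∈ Finset.range (k+1), g i := by
    have himg : ∑ j ∈ Finset.range (k+1), g (m + j)
        = ∑ i ∈ (Finset.range (k+1)).image (fun j => m + j), g i := by
      rw [Finset.sum_image (by intro x _ y _ h; simp only at h; omega)]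
    rw [himg]
    set A := (Finset.range (k+1)).image (fun j => m + j) with hA
    have hzero : ∀ i ∈ A, k < i → g i = 0 := by
      intro i _ hi
      simp only [hg, binomialPMF, Nat.choose_eq_zero_of_lt hi]
      simp
    have hsplit : ∑ i ∈ A, g i = ∑ i ∈ A.filter (fun i => i < k+1), g i := by
      symm
      apply Finset.sum_subset (Finset.filter_subset _ _)
      intro i hiA hi
      simp only [Finset.mem_filter, not_and, not_lt] at hi
      exact hzero i hiA (by have := hi hiA; omega)
    rw [hsplit]
    apply Finset.sum_le_sum_of_subset_of_nonneg
    · intro i hi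
      simp only [Finset.mem_filter] at hi
      exact Finset.mem_range.mpr hi.2
    · intro i _ _; exact hgnn i
  have step3 : ∑ i ∈ Finset.range (k+1), g i
      = Real.exp (-(t*a)) * (p * Real.exp t + (1 - p))^k := by
    rw [add_pow, Finset.mul_sum]
    apply Finset.sum_congr rfl
    intro i _
    have he : Real.exp (t*((i:ℝ)-a)) = Real.exp t ^ i * Real.exp (-(t*a)) := by
      rw [mul_sub, ← Real.exp_nat_mul, ← Real.exp_add]
      ring_nf
    simp only [hg, binomialPMF, he, mul_pow]
    ring
  calc ∑ j ∈ Finset.range (k+1), binomialPMF k p (m + j)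
      ≤ ∑ i ∈ Finset.range (k+1), g i := step1.trans step2
    _ = Real.exp (-(t*a)) * (p * Real.exp t + (1 - p))^k := step3
    _ = Real.exp (-(t*a)) * (1 - p + p * Real.exp t)^k := by ring_nf

set_option maxHeartbeats 1000000 in
/-- For `n ≥ 3`, `ε ≥ 1`, `k ≥ 1` and `p ∈ (0,1)`, a binomially distributed random variable `X`
with `k` trials and success probability `p` satisfies `Pr[X ≥ kp + s(ε, kp)] ≤ n^{-ε/3}`. -/
theorem binomial_upper_significance_tail
    (n : ℕ) (hn : 3 ≤ n) (ε : ℝ) (hε : 1 ≤ ε) (k : ℕ) (hk : 1 ≤ k)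
    (p : ℝ) (hp0 : 0 < p) (hp1 : p < 1)
    (Ω : Type*) [MeasurableSpace Ω] (P : Measure Ω) [IsProbabilityMeasure P]
    (X : Ω → ℕ) (hmeas : Measurable X)
    (hX : ∀ i : ℕ, P {ω | X ω = i} = ENNReal.ofReal (binomialPMF k p i)) :
    (P {ω | (k : ℝ) * p + sigThreshold n ε ((k : ℝ) * p) ≤ (X ω : ℝ)}).toReal ≤
      (n : ℝ) ^ (-(ε / 3)) := by
  have hn3 : (3:ℝ) ≤ (n:ℝ) := by exact_mod_cast hn
  have hnpos : (0:ℝ) < n := by linarith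
  have hk1 : (1:ℝ) ≤ (k:ℝ) := by exact_mod_cast hk
  have hkpos : (0:ℝ) < k := by linarith
  set L := Real.log n with hLdef
  have hL : 0 < L := Real.log_pos (by linarith)
  set μ := (k:ℝ) * p with hμdef
  have hμ : 0 < μ := mul_pos hkpos hp0
  set M := max μ L with hMdef
  have hμM : μ ≤ M := le_max_left _ _
  have hLM : L ≤ M := le_max_right _ _
  have hM : 0 < M := lt_of_lt_of_le hL hLM
  set s := sigThreshold n ε μ with hsdef
  -- s = ε * √(L*M)
  have hsM : s = ε * Real.sqrt (L*M) := by
    rw [hsdef, sigThreshold]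
    congr 1
    rcases le_total μ L with h | h
    · have hMeq : M = L := max_eq_right h
      have h1 : Real.sqrt (μ * L) ≤ L := by
        calc Real.sqrt (μ * L) ≤ Real.sqrt (L*L) := Real.sqrt_le_sqrt (by nlinarith)
          _ = L := Real.sqrt_mul_self hL.le
      rw [max_eq_right h1, hMeq, Real.sqrt_mul_self hL.le]
    · have hMeq : M = μ := max_eq_left h
      have h1 : L ≤ Real.sqrt (μ * L) := by
        calc L = Real.sqrt (L*L) := (Real.sqrt_mul_self hL.le).symm
          _ ≤ Real.sqrt (μ * L) := Real.sqrt_le_sqrt (by nlinarith)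
      rw [max_eq_left h1, hMeq, mul_comm μ L]
  have hsqLM : (0:ℝ) < L * M := mul_pos hL hM
  have hs : 0 < s := by
    rw [hsM]
    exact mul_pos (by linarith) (Real.sqrt_pos.mpr hsqLM)
  have hs2 : s^2 = ε^2 * (L*M) := by
    rw [hsM, mul_pow, Real.sq_sqrt hsqLM.le]
  have hsle : s ≤ ε * M := by
    rw [hsM]
    apply mul_le_mul_of_nonneg_left _ (by linarith)
    calc Real.sqrt (L*M) ≤ Real.sqrt (M*M) := Real.sqrt_le_sqrt (by nlinarith)
      _ = M := Real.sqrt_mul_self hM.le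
  set a := μ + s with hadef
  set t := Real.log (1 + s/μ) with htdef
  have hsμpos : 0 < 1 + s/μ := by positivity
  have ht0 : 0 ≤ t := Real.log_nonneg (by nlinarith [div_nonneg hs.le hμ.le])
  have het : Real.exp t = 1 + s/μ := Real.exp_log hsμpos
  -- reduce to real sum
  rw [tail_eq_sum k p hp0 hp1 Ω P X hmeas hX a]
  -- Chernoff
  have hcb := chernoff_bound k p hp0 hp1 t a ht0
  -- simplify the base
  have hbase : 1 - p + p * Real.exp t = 1 + s/(k:ℝ) := by
    rw [het]
    field_simp
    ring
  have hpow : (1 - p + p * Real.exp t)^k ≤ Real.exp s := by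
    rw [hbase]
    have h1 : (0:ℝ) ≤ 1 + s/(k:ℝ) := by positivity
    have h2 : 1 + s/(k:ℝ) ≤ Real.exp (s/(k:ℝ)) := by
      have := Real.add_one_le_exp (s/(k:ℝ)); linarith
    calc (1 + s/(k:ℝ))^k ≤ (Real.exp (s/(k:ℝ)))^k := pow_le_pow_left₀ h1 h2 k
      _ = Real.exp ((k:ℝ) * (s/(k:ℝ))) := (Real.exp_nat_mul _ k).symm
      _ = Real.exp s := by rw [mul_div_cancel₀ _ (ne_of_gt hkpos)]
  have hfinal : Real.exp (-(t*a)) * Real.exp s ≤ (n:ℝ) ^ (-(ε/3)) := by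
    rw [← Real.exp_add, Real.rpow_def_of_pos hnpos]
    apply Real.exp_le_exp.mpr
    -- need: -(t*a) + s ≤ L * (-(ε/3)), i.e. s + (ε/3)*L ≤ t*(μ+s)
    have hden : (0:ℝ) < 2*μ + s := by linarith
    have hts : 2*s/(2*μ+s) ≤ t := by
      have h1 := aux_log_ineq (s/μ) (div_nonneg hs.le hμ.le)
      have h2 : 2*(s/μ)/(2+(s/μ)) = 2*s/(2*μ+s) := by
        field_simp
      rw [h2] at h1
      exact h1
    have hεL : (0:ℝ) ≤ ε*L := by positivity
    have e1 : ε*L*(2*μ) ≤ 2*(ε*L*M) := by nlinarith [mul_le_mul_of_nonneg_left hμM hεL]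
    have e2 : ε*L*s ≤ ε*L*(ε*M) := mul_le_mul_of_nonneg_left hsle hεL
    have e3 : ε*L*M ≤ ε^2*(L*M) := by nlinarith [mul_le_mul_of_nonneg_right (mul_le_mul_of_nonneg_right hε hL.le) hM.le]
    have hkey : ε*L*(2*μ+s) ≤ 3*s^2 := by nlinarith [hs2]
    have h3 : s + (ε/3)*L ≤ (2*s/(2*μ+s)) * (μ+s) := by
      rw [div_mul_eq_mul_div, div_mul_eq_mul_div, le_div_iff₀ hden]
      nlinarith [hkey]
    have h4 : (2*s/(2*μ+s)) * (μ+s) ≤ t * (μ+s) :=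
      mul_le_mul_of_nonneg_right hts (by linarith)
    have : s + (ε/3)*L ≤ t * a := by rw [hadef]; linarith
    nlinarith [this]
  calc ∑ j ∈ Finset.range (k+1), binomialPMF k p (⌈a⌉₊ + j)
      ≤ Real.exp (-(t*a)) * (1 - p + p * Real.exp t)^k := hcb
    _ ≤ Real.exp (-(t*a)) * Real.exp s :=
        mul_le_mul_of_nonneg_left hpow (Real.exp_nonneg _)
    _ ≤ (n:ℝ) ^ (-(ε/3)) := hfinal
end

section
/- Let $n \ge 3$ be an integer, let $\varepsilon > 12$, and let $\tau \in \{1/n, 1/2\}$. Set $c = (4/\tau) e^4 \varepsilon^2$ and let $k$ be an integer with $k \ge 4 c \ln n$. Let $X$ be binomially distributed with $k$ trials and success probability $(1 + e^{-2}/2)\tau$. Then $\Pr\big[X < k\tau + s(\varepsilon, k\tau)\big] \le n^{-\varepsilon^2/3}$. -/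
open MeasureTheory ProbabilityTheory

lemma exp_neg_le_cubic {x : ℝ} (h0 : 0 ≤ x) (h1 : x ≤ 1) :
    Real.exp (-x) ≤ 1 - x + x ^ 2 / 2 + 2 / 9 * x ^ 3 := by
  have hb := Real.exp_bound (x := -x) (by rw [abs_neg, abs_of_nonneg h0]; exact h1)
      (n := 3) (by norm_num)
  rw [abs_neg, abs_of_nonneg h0] at hb
  have hsum : ∑ m ∈ Finset.range 3, (-x) ^ m / (m.factorial : ℝ) = 1 - x + x ^ 2 / 2 := by
    simp [Finset.sum_range_succ, Nat.factorial]
    ring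
  rw [hsum] at hb
  have h3 := (abs_le.mp hb).2
  norm_num [Nat.factorial] at h3
  linarith

lemma chernoff_sum (k m : ℕ) (p lam T : ℝ) (hp0 : 0 ≤ p) (hp1 : p ≤ 1) (hlam : 0 ≤ lam)
    (hm : ∀ i : ℕ, i < m → (i : ℝ) < T) :
    ∑ i ∈ Finset.range m, binomialPMF k p i
      ≤ Real.exp (lam * T) * (1 - p + p * Real.exp (-lam)) ^ k := by
  have h1p : (0:ℝ) ≤ 1 - p := by linarith
  have hpmf : ∀ i, 0 ≤ binomialPMF k p i := by
    intro i; unfold binomialPMF; positivity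
  have hterm : ∀ i : ℕ, 0 ≤ binomialPMF k p i * Real.exp (lam * (T - i)) := fun i =>
    mul_nonneg (hpmf i) (Real.exp_pos _).le
  have step1 : ∑ i ∈ Finset.range m, binomialPMF k p i
      ≤ ∑ i ∈ Finset.range m, binomialPMF k p i * Real.exp (lam * (T - i)) := by
    refine Finset.sum_le_sum fun i hi => ?_
    have hiT : (i : ℝ) < T := hm i (Finset.mem_range.mp hi)
    have h1e : (1:ℝ) ≤ Real.exp (lam * (T - i)) :=
      Real.one_le_exp (mul_nonneg hlam (by linarith))
    exact le_mul_of_one_le_right (hpmf i) h1e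
  have step2 : ∑ i ∈ Finset.range m, binomialPMF k p i * Real.exp (lam * (T - i))
      ≤ ∑ i ∈ Finset.range (max m (k + 1)), binomialPMF k p i * Real.exp (lam * (T - i)) :=
    Finset.sum_le_sum_of_subset_of_nonneg
      (Finset.range_subset_range.mpr (le_max_left _ _)) (fun i _ _ => hterm i)
  have step3 : ∑ i ∈ Finset.range (max m (k + 1)), binomialPMF k p i * Real.exp (lam * (T - i))
      = ∑ i ∈ Finset.range (k + 1), binomialPMF k p i * Real.exp (lam * (T - i)) := by
    refine (Finset.sum_subset (Finset.range_subset_range.mpr (le_max_right _ _)) ?_).symm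
    intro i _ hni
    have hki : k < i := by
      simpa using Nat.lt_of_succ_le (not_lt.mp (fun h => hni (Finset.mem_range.mpr h)))
    unfold binomialPMF
    rw [Nat.choose_eq_zero_of_lt hki]
    simp
  have step4 : ∑ i ∈ Finset.range (k + 1), binomialPMF k p i * Real.exp (lam * (T - i))
      = Real.exp (lam * T) * (p * Real.exp (-lam) + (1 - p)) ^ k := by
    rw [add_pow, Finset.mul_sum]
    refine Finset.sum_congr rfl fun i _ => ?_
    unfold binomialPMF
    have he : Real.exp (lam * (T - i)) = Real.exp (lam * T) * Real.exp (-lam) ^ i := by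
      rw [← Real.exp_nat_mul, ← Real.exp_add]
      congr 1
      ring
    rw [he, mul_pow]
    ring
  calc ∑ i ∈ Finset.range m, binomialPMF k p i
      ≤ ∑ i ∈ Finset.range (k + 1), binomialPMF k p i * Real.exp (lam * (T - i)) := by
        rw [← step3]; exact le_trans step1 step2
    _ = Real.exp (lam * T) * (p * Real.exp (-lam) + (1 - p)) ^ k := step4
    _ = Real.exp (lam * T) * (1 - p + p * Real.exp (-lam)) ^ k := by ring

set_option maxHeartbeats 1000000 in
/-- Key estimate for the sig-cGA on LeadingOnes: for `n ≥ 3`, `ε > 12`, `τ ∈ {1/n, 1/2}`,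
`c = (4/τ)e⁴ε²` and `k ≥ 4c ln n`, a `Bin(k, (1 + e⁻²/2)τ)` random variable `X` satisfies
`Pr[X < kτ + s(ε, kτ)] ≤ n^{-ε²/3}`. -/
theorem binomial_lower_tail_leadingones
    (n : ℕ) (hn : 3 ≤ n) (ε : ℝ) (hε : 12 < ε)
    (τ : ℝ) (hτ : τ = 1 / (n : ℝ) ∨ τ = 1 / 2)
    (c : ℝ) (hc : c = (4 / τ) * Real.exp 4 * ε ^ 2)
    (k : ℕ) (hk : 4 * c * Real.log n ≤ (k : ℝ))
    (Ω : Type*) [MeasurableSpace Ω] (P : Measure Ω) [IsProbabilityMeasure P]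
    (X : Ω → ℕ) (hmeas : Measurable X)
    (hX : ∀ i : ℕ,
      P {ω | X ω = i} = ENNReal.ofReal (binomialPMF k ((1 + Real.exp (-2) / 2) * τ) i)) :
    (P {ω | (X ω : ℝ) < (k : ℝ) * τ + sigThreshold n ε ((k : ℝ) * τ)}).toReal ≤
      (n : ℝ) ^ (-(ε ^ 2 / 3)) := by
  -- basic numeric facts
  have hn3 : (3:ℝ) ≤ (n:ℝ) := by exact_mod_cast hn
  have hε0 : (0:ℝ) < ε := by linarith
  have hε2 : (144:ℝ) ≤ ε ^ 2 := by nlinarith only [hε]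
  have hL0 : 0 < Real.log n := Real.log_pos (by linarith)
  set L := Real.log n with hLdef
  have hτ0 : 0 < τ := by
    rcases hτ with h | h <;> rw [h] <;> positivity
  have hτh : τ ≤ 1 / 2 := by
    rcases hτ with h | h
    · rw [h, div_le_div_iff₀ (by linarith) (by norm_num)]; linarith
    · rw [h]
  set d := Real.exp (-2) with hddef
  have hd0 : 0 < d := Real.exp_pos _
  have he1l := Real.exp_one_gt_d9
  have he1u := Real.exp_one_lt_d9
  have he2 : Real.exp 2 = Real.exp 1 * Real.exp 1 := by
    rw [← Real.exp_add]; norm_num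
  have he2l : (7.389:ℝ) ≤ Real.exp 2 := by
    rw [he2]; nlinarith only [he1l]
  have he2u : Real.exp 2 ≤ 8 := by
    rw [he2]; nlinarith only [he1u, he1l]
  have he4 : Real.exp 4 = Real.exp 2 * Real.exp 2 := by
    rw [← Real.exp_add]; norm_num
  have he4l : (54:ℝ) ≤ Real.exp 4 := by
    rw [he4]; nlinarith only [he2l]
  have hd_eq : d * Real.exp 2 = 1 := by
    rw [hddef, ← Real.exp_add]; norm_num
  have hdu : d ≤ 1 / 7 := by nlinarith only [hd_eq, he2l, hd0]
  have hdl : 1 / 8 ≤ d := by nlinarith only [hd_eq, he2u, hd0]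
  set p := (1 + d / 2) * τ with hpdef
  have hp0 : 0 < p := by positivity
  have hp1 : p ≤ 1 := by
    rw [hpdef]; nlinarith only [hdu, hτh, hτ0, hd0]
  set M := (k : ℝ) * τ with hMdef
  have hcτ : c * τ = 4 * Real.exp 4 * ε ^ 2 := by
    have h4τ : 4 / τ * τ = 4 := div_mul_cancel₀ 4 hτ0.ne'
    rw [hc]; linear_combination Real.exp 4 * ε ^ 2 * h4τ
  have hM : 16 * Real.exp 4 * ε ^ 2 * L ≤ M := by
    have h1 : 4 * c * L * τ ≤ (k:ℝ) * τ := mul_le_mul_of_nonneg_right hk hτ0.le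
    have h2 : 4 * c * L * τ = 16 * Real.exp 4 * ε ^ 2 * L := by
      linear_combination (4 * L) * hcτ
    rw [hMdef]; linarith only [h1, h2]
  have hM0 : 0 < M := by
    have h1 : (0:ℝ) < 16 * Real.exp 4 * ε ^ 2 * L := by positivity
    linarith only [h1, hM]
  have hML : L ≤ M := by
    have h1 : (1:ℝ) ≤ 16 * Real.exp 4 * ε ^ 2 := by nlinarith only [he4l, hε2]
    nlinarith only [hM, h1, hL0]
  set s := sigThreshold n ε M with hsdef
  have hs0 : 0 ≤ s := by
    rw [hsdef]
    unfold sigThreshold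
    exact mul_nonneg hε0.le (le_trans hL0.le (le_max_right _ _))
  have hs_le : s ≤ M * d / 4 := by
    have hmax : max (Real.sqrt (M * L)) L = Real.sqrt (M * L) := by
      refine max_eq_left ?_
      calc L = Real.sqrt (L * L) := (Real.sqrt_mul_self hL0.le).symm
        _ ≤ Real.sqrt (M * L) :=
            Real.sqrt_le_sqrt (mul_le_mul_of_nonneg_right hML hL0.le)
    have hsqrt : Real.sqrt (M * L) ≤ M / (4 * Real.exp 2 * ε) := by
      have hq : M * L ≤ (M / (4 * Real.exp 2 * ε)) ^ 2 := by
        rw [div_pow, show (4 * Real.exp 2 * ε) ^ 2 = 16 * Real.exp 4 * ε ^ 2 by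
          rw [he4]; ring]
        rw [le_div_iff₀ (by positivity)]
        nlinarith only [mul_le_mul_of_nonneg_left hM hM0.le]
      calc Real.sqrt (M * L) ≤ Real.sqrt ((M / (4 * Real.exp 2 * ε)) ^ 2) :=
            Real.sqrt_le_sqrt hq
        _ = M / (4 * Real.exp 2 * ε) := Real.sqrt_sq (by positivity)
    have h3 : s ≤ ε * (M / (4 * Real.exp 2 * ε)) := by
      rw [hsdef]
      unfold sigThreshold
      rw [← hLdef, hmax]
      exact mul_le_mul_of_nonneg_left hsqrt hε0.le
    have h4 : ε * (M / (4 * Real.exp 2 * ε)) = M * d / 4 := by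
      have hd' : d = 1 / Real.exp 2 := by
        rw [eq_div_iff (Real.exp_ne_zero 2)]; exact hd_eq
      rw [hd']
      field_simp
    linarith only [h3, h4]
  set T := M + s with hTdef
  set μ := M * (1 + d / 2) with hμdef
  have hμ0 : 0 < μ := by positivity
  have hgap : M * d / 4 ≤ μ - T := by
    rw [hμdef, hTdef]; nlinarith only [hs_le]
  have hgap0 : 0 < μ - T := lt_of_lt_of_le (by positivity) hgap
  set γ := (μ - T) / μ with hγdef
  have hγ0 : 0 < γ := div_pos hgap0 hμ0
  have hγu : γ ≤ d / 2 := by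
    rw [hγdef, div_le_iff₀ hμ0, hμdef, hTdef]
    nlinarith only [hs0, mul_nonneg (mul_nonneg hM0.le hd0.le) hd0.le]
  have hγ14 : γ ≤ 1 / 14 := by linarith only [hγu, hdu]
  have hγ1 : γ ≤ 1 := by linarith only [hγ14]
  have hTγ : T = μ * (1 - γ) := by
    rw [hγdef]
    field_simp
    ring
  have hkp : (k : ℝ) * p = μ := by rw [hpdef, hμdef, hMdef]; ring
  -- the Chernoff bound
  set m := ⌈T⌉₊ with hmdef
  have key := chernoff_sum k m p γ T hp0.le hp1 hγ0.le
    (fun i hi => Nat.lt_ceil.mp hi)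
  -- bound the RHS by an exponential
  have hbase0 : (0:ℝ) ≤ 1 - p + p * Real.exp (-γ) := by
    have h1 : 0 ≤ p * Real.exp (-γ) := mul_nonneg hp0.le (Real.exp_pos _).le
    linarith only [hp1, h1]
  have hbase : 1 - p + p * Real.exp (-γ) ≤ Real.exp (p * (Real.exp (-γ) - 1)) := by
    calc 1 - p + p * Real.exp (-γ) = p * (Real.exp (-γ) - 1) + 1 := by ring
      _ ≤ Real.exp (p * (Real.exp (-γ) - 1)) := Real.add_one_le_exp _
  have hpow : (1 - p + p * Real.exp (-γ)) ^ k
      ≤ Real.exp ((k:ℝ) * (p * (Real.exp (-γ) - 1))) := by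
    rw [Real.exp_nat_mul]
    exact pow_le_pow_left₀ hbase0 hbase k
  have hE1 : Real.exp (γ * T) * (1 - p + p * Real.exp (-γ)) ^ k
      ≤ Real.exp (γ * T + (k:ℝ) * (p * (Real.exp (-γ) - 1))) := by
    rw [Real.exp_add]
    exact mul_le_mul_of_nonneg_left hpow (Real.exp_pos _).le
  -- bound the exponent
  have hcub := exp_neg_le_cubic hγ0.le hγ1
  have hEbound : γ * T + (k:ℝ) * (p * (Real.exp (-γ) - 1)) ≤ -(ε ^ 2 / 3) * L := by
    have hkpμ : (k:ℝ) * (p * (Real.exp (-γ) - 1)) = μ * (Real.exp (-γ) - 1) := by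
      rw [← hkp]; ring
    rw [hkpμ, hTγ]
    have hμγ2 : (0:ℝ) ≤ μ * γ ^ 2 := by positivity
    have h6 : μ * (Real.exp (-γ) - 1) ≤ μ * (-γ + γ ^ 2 / 2 + 2 / 9 * γ ^ 3) := by
      apply mul_le_mul_of_nonneg_left _ hμ0.le
      linarith only [hcub]
    have h7 : γ * (μ * (1 - γ)) + μ * (-γ + γ ^ 2 / 2 + 2 / 9 * γ ^ 3)
        = μ * γ ^ 2 * (2 / 9 * γ - 1 / 2) := by ring
    have h8 : μ * γ ^ 2 * (2 / 9 * γ - 1 / 2) ≤ -(61 / 126) * (μ * γ ^ 2) := by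
      nlinarith only [hγ14, hμγ2]
    have h10 : M / 32 ≤ μ - T := by nlinarith only [hgap, hdl, hM0]
    have h11 : μ ≤ 15 / 14 * M := by
      rw [hμdef]; nlinarith only [hdu, hM0]
    have h9 : 7 * M / 7680 ≤ μ * γ ^ 2 := by
      have hμγ : μ * γ ^ 2 = (μ - T) ^ 2 / μ := by
        rw [hγdef]; field_simp
      rw [hμγ, le_div_iff₀ hμ0]
      have h12a : (M / 32) ^ 2 ≤ (μ - T) ^ 2 :=
        pow_le_pow_left₀ (by positivity) h10 2
      have h12b : μ * (7 * M / 7680) ≤ (15 / 14 * M) * (7 * M / 7680) :=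
        mul_le_mul_of_nonneg_right h11 (by positivity)
      nlinarith only [h12a, h12b]
    have hnn : (0:ℝ) ≤ ε ^ 2 * L := by positivity
    have h12 : 864 * (ε ^ 2 * L) ≤ M := by nlinarith only [hM, he4l, hnn]
    calc γ * (μ * (1 - γ)) + μ * (Real.exp (-γ) - 1)
        ≤ γ * (μ * (1 - γ)) + μ * (-γ + γ ^ 2 / 2 + 2 / 9 * γ ^ 3) := by
          linarith only [h6]
      _ = μ * γ ^ 2 * (2 / 9 * γ - 1 / 2) := h7
      _ ≤ -(61 / 126) * (μ * γ ^ 2) := h8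
      _ ≤ -(61 / 126) * (7 * M / 7680) := by linarith only [h9]
      _ ≤ -(ε ^ 2 / 3) * L := by linarith only [h12, hnn]
  -- measure computation
  have hsetT : {ω | (X ω : ℝ) < (k : ℝ) * τ + sigThreshold n ε ((k : ℝ) * τ)}
      = ⋃ i ∈ Finset.range m, {ω | X ω = i} := by
    ext ω
    simp only [Set.mem_setOf_eq, Set.mem_iUnion, Finset.mem_range, exists_prop]
    constructor
    · intro h
      refine ⟨X ω, Nat.lt_ceil.mpr ?_, rfl⟩
      rw [hTdef, hsdef, hMdef]
      exact h
    · rintro ⟨i, hi, hXi⟩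
      rw [hXi]
      have := Nat.lt_ceil.mp hi
      rw [hTdef, hsdef, hMdef] at this
      exact this
  have hpmf0 : ∀ i : ℕ, 0 ≤ binomialPMF k p i := by
    intro i
    unfold binomialPMF
    have h1 : (0:ℝ) ≤ 1 - p := by linarith only [hp1]
    positivity
  have hPeq : P {ω | (X ω : ℝ) < (k : ℝ) * τ + sigThreshold n ε ((k : ℝ) * τ)}
      = ENNReal.ofReal (∑ i ∈ Finset.range m, binomialPMF k p i) := by
    rw [hsetT, measure_biUnion_finset]
    · rw [ENNReal.ofReal_sum_of_nonneg fun i _ => hpmf0 i]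
      exact Finset.sum_congr rfl fun i _ => hX i
    · intro i _ j _ hij
      simp only [Set.disjoint_left, Set.mem_setOf_eq]
      intro ω h1 h2
      exact hij (h1 ▸ h2 ▸ rfl)
    · intro i _
      exact hmeas (measurableSet_singleton i)
  rw [hPeq, ENNReal.toReal_ofReal (Finset.sum_nonneg fun i _ => hpmf0 i)]
  calc ∑ i ∈ Finset.range m, binomialPMF k p i
      ≤ Real.exp (γ * T) * (1 - p + p * Real.exp (-γ)) ^ k := key
    _ ≤ Real.exp (γ * T + (k:ℝ) * (p * (Real.exp (-γ) - 1))) := hE1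
    _ ≤ Real.exp (-(ε ^ 2 / 3) * L) := Real.exp_le_exp.mpr hEbound
    _ = (n : ℝ) ^ (-(ε ^ 2 / 3)) := by
        rw [Real.rpow_def_of_pos (by linarith : (0:ℝ) < (n:ℝ))]
        congr 1
        rw [hLdef]; ring
end

section
/- Let $S$ be the sum of $n$ independent $\{0,1\}$-valued random variables (Poisson trials) with success probabilities $\tau_1, \ldots, \tau_n$ satisfying $1/6 \le \tau_i \le 5/6$ for all $i$. Then there is a constant $C > 0$, independent of $n$ and of the $\tau_i$, such that for every $s \in \{0, 1, \ldots, n\}$ it holds that $\Pr[S = s] \le C/\sqrt{n}$. -/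
open MeasureTheory ProbabilityTheory

open Finset


-- modulus bound for one factor
lemma aux_abs {τ θ : ℝ} (h1 : 1/6 ≤ τ) (h2 : τ ≤ 5/6) :
    ‖(1 - (τ:ℂ)) + τ * Complex.exp (θ * Complex.I)‖
      ≤ Real.exp (-(5/36) * (1 - Real.cos θ)) := by
  have hre : ((1 - (τ:ℂ)) + τ * Complex.exp (θ * Complex.I)).re = 1 - τ + τ * Real.cos θ := by
    simp [Complex.exp_ofReal_mul_I_re, Complex.mul_re, Complex.exp_ofReal_mul_I_im]
  have him : ((1 - (τ:ℂ)) + τ * Complex.exp (θ * Complex.I)).im = τ * Real.sin θ := by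
    simp [Complex.exp_ofReal_mul_I_re, Complex.mul_im, Complex.exp_ofReal_mul_I_im]
  have hsq : ‖(1 - (τ:ℂ)) + τ * Complex.exp (θ * Complex.I)‖ ^ 2
      = 1 - 2*τ*(1-τ)*(1 - Real.cos θ) := by
    rw [Complex.sq_norm, Complex.normSq_apply, hre, him]
    linear_combination (τ^2) * (Real.sin_sq_add_cos_sq θ)
  have hcos1 : Real.cos θ ≤ 1 := Real.cos_le_one θ
  have hexp : 1 - 2*τ*(1-τ)*(1 - Real.cos θ) ≤ Real.exp (-(5/18) * (1 - Real.cos θ)) := by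
    have h3 := Real.add_one_le_exp (-(5/18) * (1 - Real.cos θ))
    nlinarith [mul_nonneg (sub_nonneg.2 h1 : (0:ℝ) ≤ τ - 1/6) (sub_nonneg.2 h2 : (0:ℝ) ≤ 5/6 - τ)]
  have hsq2 : ‖(1 - (τ:ℂ)) + τ * Complex.exp (θ * Complex.I)‖ ^ 2
      ≤ Real.exp (-(5/36) * (1 - Real.cos θ)) ^ 2 := by
    rw [← Real.exp_nat_mul]
    · rw [hsq]
      convert hexp using 2
      ring
  calc ‖(1 - (τ:ℂ)) + τ * Complex.exp (θ * Complex.I)‖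
      = Real.sqrt (‖(1 - (τ:ℂ)) + τ * Complex.exp (θ * Complex.I)‖ ^ 2) :=
        (Real.sqrt_sq (norm_nonneg _)).symm
    _ ≤ Real.sqrt (Real.exp (-(5/36) * (1 - Real.cos θ)) ^ 2) := Real.sqrt_le_sqrt hsq2
    _ = Real.exp (-(5/36) * (1 - Real.cos θ)) := Real.sqrt_sq (Real.exp_nonneg _)


lemma aux_root {m : ℕ} (hm : m ≠ 0) {ζ : ℂ} (hprim : IsPrimitiveRoot ζ m) (d : ℤ) :
    ∑ k ∈ Finset.range m, ζ ^ (d * (k:ℤ)) = if (m:ℤ) ∣ d then (m:ℂ) else 0 := by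
  by_cases h : (m:ℤ) ∣ d
  · rw [if_pos h]
    have h1 : ζ ^ d = 1 := (hprim.zpow_eq_one_iff_dvd d).mpr h
    have h2 : ∀ k ∈ Finset.range m, ζ ^ (d * (k:ℤ)) = 1 := by
      intro k _; rw [zpow_mul, h1, one_zpow]
    rw [Finset.sum_congr rfl h2]; simp
  · rw [if_neg h]
    have h1 : ζ ^ d ≠ 1 := fun c => h ((hprim.zpow_eq_one_iff_dvd d).mp c)
    have hE : ∀ k ∈ Finset.range m, ζ ^ (d * (k:ℤ)) = (ζ ^ d) ^ k := by
      intro k _; rw [zpow_mul, zpow_natCast]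
    rw [Finset.sum_congr rfl hE, geom_sum_eq h1]
    have h3 : (ζ ^ d) ^ m = 1 := by
      rw [← zpow_natCast (ζ ^ d) m, ← zpow_mul, mul_comm, zpow_mul, zpow_natCast,
        hprim.pow_eq_one, one_zpow]
    rw [h3]; simp

lemma aux_dft {n : ℕ} (τ : Fin n → ℝ) (s : ℕ) (hs : s ≤ n)
    {ζ : ℂ} (hζ0 : ζ ≠ 0) (hprim : IsPrimitiveRoot ζ (n+1)) :
    ((n:ℂ)+1) * ∑ A ∈ Finset.powersetCard s Finset.univ,
        ∏ i, (if i ∈ A then (τ i:ℂ) else 1 - τ i)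
      = ∑ k ∈ Finset.range (n+1),
          (∏ i, ((1 - (τ i:ℂ)) + τ i * ζ ^ k)) * ζ ^ (-((s:ℤ) * k)) := by
  classical
  have key : ∀ k : ℕ, (∏ i, ((1 - (τ i:ℂ)) + τ i * ζ ^ k)) * ζ ^ (-((s:ℤ) * k))
      = ∑ A ∈ (Finset.univ : Finset (Fin n)).powerset,
          ((∏ i ∈ A, (τ i:ℂ)) * ∏ i ∈ Finset.univ \ A, (1 - (τ i:ℂ)))
            * ζ ^ ((((A.card:ℤ) - s)) * k) := by
    intro k
    have h1 : ∏ i, ((1 - (τ i:ℂ)) + τ i * ζ ^ k)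
        = ∑ A ∈ (Finset.univ : Finset (Fin n)).powerset,
            (∏ i ∈ A, (τ i:ℂ) * ζ ^ k) * ∏ i ∈ Finset.univ \ A, (1 - (τ i:ℂ)) := by
      rw [← Finset.prod_add]
      exact Finset.prod_congr rfl fun i _ => by ring
    rw [h1, Finset.sum_mul]
    refine Finset.sum_congr rfl fun A hA => ?_
    rw [Finset.prod_mul_distrib, Finset.prod_const]
    have hz : (ζ ^ k) ^ A.card * ζ ^ (-((s:ℤ) * k)) = ζ ^ ((((A.card:ℤ) - s)) * k) := by
      rw [← zpow_natCast ζ k, ← zpow_natCast (ζ ^ (k:ℤ)) A.card, ← zpow_mul, ← zpow_add₀ hζ0]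
      congr 1; push_cast; ring
    calc (∏ i ∈ A, (τ i:ℂ)) * (ζ ^ k) ^ A.card * (∏ i ∈ Finset.univ \ A, (1 - (τ i:ℂ)))
          * ζ ^ (-((s:ℤ) * k))
        = ((∏ i ∈ A, (τ i:ℂ)) * ∏ i ∈ Finset.univ \ A, (1 - (τ i:ℂ)))
            * ((ζ ^ k) ^ A.card * ζ ^ (-((s:ℤ) * k))) := by ring
      _ = _ := by rw [hz]
  rw [Finset.sum_congr rfl fun k _ => key k, Finset.sum_comm]
  have h2 : ∀ A ∈ (Finset.univ : Finset (Fin n)).powerset,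
      ∑ k ∈ Finset.range (n+1),
        ((∏ i ∈ A, (τ i:ℂ)) * ∏ i ∈ Finset.univ \ A, (1 - (τ i:ℂ)))
          * ζ ^ ((((A.card:ℤ) - s)) * k)
      = ((∏ i ∈ A, (τ i:ℂ)) * ∏ i ∈ Finset.univ \ A, (1 - (τ i:ℂ)))
          * (if A.card = s then ((n:ℂ)+1) else 0) := by
    intro A hA
    rw [← Finset.mul_sum, aux_root (Nat.succ_ne_zero n) hprim ((A.card:ℤ) - s)]
    congr 1
    have hcard : A.card ≤ n := by
      simpa using Finset.card_le_card (Finset.mem_powerset.mp hA)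
    have hiff : ((n:ℤ)+1) ∣ ((A.card:ℤ) - s) ↔ A.card = s := by
      constructor
      · intro hdvd
        have h0 : ((A.card:ℤ) - s) = 0 := by
          refine Int.eq_zero_of_abs_lt_dvd (by exact_mod_cast hdvd) ?_
          rw [abs_lt]; omega
        omega
      · intro h; simp [h]
    by_cases h : A.card = s
    · rw [if_pos ((by exact_mod_cast hiff.mpr h : ((n+1:ℕ):ℤ) ∣ _)), if_pos h]
      push_cast; ring
    · rw [if_neg (fun c => h (hiff.mp (by exact_mod_cast c))), if_neg h]
  rw [Finset.sum_congr rfl h2]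
  rw [Finset.powersetCard_eq_filter, Finset.sum_filter, Finset.mul_sum]
  refine Finset.sum_congr rfl fun A hA => ?_
  have hw : ∏ i, (if i ∈ A then (τ i:ℂ) else 1 - τ i)
      = (∏ i ∈ A, (τ i:ℂ)) * ∏ i ∈ Finset.univ \ A, (1 - (τ i:ℂ)) := by
    rw [Finset.prod_ite]
    congr 1
    · congr 1; ext i; simp
    · congr 1; ext i; simp
  by_cases h : A.card = s <;> simp [h, hw] <;> ring

set_option maxHeartbeats 1000000 in
lemma partB {n : ℕ} (hn : 0 < n) (τ : Fin n → ℝ)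
    (hτ : ∀ i, 1 / 6 ≤ τ i ∧ τ i ≤ 5 / 6) (s : ℕ) (hs : s ≤ n) :
    ∑ A ∈ Finset.powersetCard s Finset.univ, ∏ i, (if i ∈ A then τ i else 1 - τ i)
      ≤ 12 / Real.sqrt n := by
  classical
  set m : ℕ := n + 1 with hmdef
  have hm0 : (0:ℝ) < m := by positivity
  set ζ : ℂ := Complex.exp (2 * Real.pi * Complex.I / m) with hζdef
  have hprim : IsPrimitiveRoot ζ m := Complex.isPrimitiveRoot_exp m (Nat.succ_ne_zero n)
  have hζ0 : ζ ≠ 0 := Complex.exp_ne_zero _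
  have hζabs : ‖ζ‖ = 1 := by
    rw [hζdef, Complex.norm_exp]; norm_num [Complex.div_re]
  set S : ℝ := ∑ A ∈ Finset.powersetCard s Finset.univ,
      ∏ i, (if i ∈ A then τ i else 1 - τ i) with hSdef
  have hS0 : 0 ≤ S := by
    apply Finset.sum_nonneg; intro A _
    apply Finset.prod_nonneg; intro i _
    by_cases h : i ∈ A <;> simp [h] <;> linarith [(hτ i).1, (hτ i).2]
  -- parameters
  set t : ℝ := Real.sqrt ((10/9) * n) / m with htdef
  have ht : 0 < t := by
    apply div_pos _ hm0
    apply Real.sqrt_pos.mpr; positivity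
  have htm : t * m = Real.sqrt ((10/9) * n) := div_mul_cancel₀ _ (ne_of_gt hm0)
  -- per-k bound
  have boundk : ∀ k ∈ Finset.range m,
      ‖∏ i, ((1 - (τ i:ℂ)) + τ i * ζ ^ k)‖
        ≤ 3 * (Real.exp (-(t*k)) + Real.exp (-(t*((m:ℝ)-k)))) := by
    intro k hk
    have hkm : k ≤ m := le_of_lt (Finset.mem_range.mp hk)
    set θ : ℝ := 2 * Real.pi * k / m with hθdef
    have hζk : ζ ^ k = Complex.exp ((θ:ℂ) * Complex.I) := by
      rw [hζdef, ← Complex.exp_nat_mul]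
      congr 1
      push_cast [hθdef]
      have : (m:ℂ) ≠ 0 := by exact_mod_cast (ne_of_gt hm0)
      field_simp
    have h2 : ‖∏ i, ((1 - (τ i:ℂ)) + τ i * ζ ^ k)‖
        ≤ Real.exp ((n:ℝ) * (-(5/36) * (1 - Real.cos θ))) := by
      rw [norm_prod]
      calc ∏ i, ‖(1 - (τ i:ℂ)) + τ i * ζ ^ k‖
          ≤ ∏ _i : Fin n, Real.exp (-(5/36) * (1 - Real.cos θ)) := by
            apply Finset.prod_le_prod (fun i _ => norm_nonneg _)
            intro i _
            rw [hζk]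
            exact aux_abs (hτ i).1 (hτ i).2
        _ = Real.exp ((n:ℝ) * (-(5/36) * (1 - Real.cos θ))) := by
            rw [Finset.prod_const, Finset.card_univ, Fintype.card_fin, ← Real.exp_nat_mul]
    set D : ℕ := min k (m - k) with hDdef
    have hDm : 2 * (D:ℝ) ≤ m := by
      have : 2 * D ≤ m := by omega
      exact_mod_cast this
    have hcosD : Real.cos θ = Real.cos (2 * Real.pi * D / m) := by
      rcases Nat.le_total k (m - k) with h | h
      · rw [hθdef]; congr 2; rw [hDdef, min_eq_left h]
      · have hD : D = m - k := by rw [hDdef, min_eq_right h]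
        have hcast : ((m - k : ℕ) : ℝ) = (m:ℝ) - k := by
          rw [Nat.cast_sub hkm]
        rw [hD, hcast]
        have he : 2 * Real.pi * ((m:ℝ) - k) / m = 2 * Real.pi - θ := by
          rw [hθdef]; field_simp
        rw [he, Real.cos_two_pi_sub]
    have hcosb : Real.cos θ ≤ 1 - 8 * (D:ℝ)^2 / (m:ℝ)^2 := by
      rw [hcosD]
      have habs : |2 * Real.pi * D / m| ≤ Real.pi := by
        rw [abs_of_nonneg (by positivity), div_le_iff₀ hm0]
        nlinarith [Real.pi_pos]
      have hcb := Real.cos_le_one_sub_mul_cos_sq habs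
      have hπ : (0:ℝ) < Real.pi := Real.pi_pos
      have he : 2 / Real.pi ^ 2 * (2 * Real.pi * D / m) ^ 2 = 8 * (D:ℝ)^2 / (m:ℝ)^2 := by
        field_simp
        ring
      linarith [he ▸ hcb]
    have ht2 : (t * D)^2 = (10/9) * n * (D:ℝ)^2 / (m:ℝ)^2 := by
      rw [htdef]
      rw [mul_pow, div_pow, Real.sq_sqrt (by positivity)]
      ring
    have h5 : Real.exp ((n:ℝ) * (-(5/36) * (1 - Real.cos θ))) ≤ Real.exp (-(t*D)^2) := by
      apply Real.exp_le_exp.mpr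
      rw [ht2]
      have hnn : (0:ℝ) ≤ (n:ℝ) := Nat.cast_nonneg n
      have h8 : 8 * (D:ℝ)^2 / (m:ℝ)^2 ≤ 1 - Real.cos θ := by linarith
      have h9 : (10/9)*(n:ℝ)*(D:ℝ)^2/(m:ℝ)^2 ≤ (5/36)*(n:ℝ)*(1 - Real.cos θ) := by
        calc (10/9)*(n:ℝ)*(D:ℝ)^2/(m:ℝ)^2 = (5/36)*(n:ℝ) * (8*(D:ℝ)^2/(m:ℝ)^2) := by ring
          _ ≤ (5/36)*(n:ℝ)*(1-Real.cos θ) :=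
              mul_le_mul_of_nonneg_left h8 (by positivity)
      linarith
    have h6 : Real.exp (-(t*D)^2) ≤ 3 * Real.exp (-(t*(D:ℝ))) := by
      have hq : -(t*D)^2 ≤ 1/4 + -(t*(D:ℝ)) := by nlinarith [sq_nonneg (t*(D:ℝ) - 1/2)]
      calc Real.exp (-(t*D)^2) ≤ Real.exp (1/4 + -(t*(D:ℝ))) := Real.exp_le_exp.mpr hq
        _ = Real.exp (1/4) * Real.exp (-(t*(D:ℝ))) := Real.exp_add _ _
        _ ≤ 3 * Real.exp (-(t*(D:ℝ))) := by
            apply mul_le_mul_of_nonneg_right _ (Real.exp_nonneg _)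
            calc Real.exp (1/4 : ℝ) ≤ Real.exp 1 := Real.exp_le_exp.mpr (by norm_num)
              _ ≤ 3 := by linarith [Real.exp_one_lt_d9]
    have h7 : Real.exp (-(t*(D:ℝ))) ≤ Real.exp (-(t*k)) + Real.exp (-(t*((m:ℝ)-k))) := by
      rcases Nat.le_total k (m - k) with h | h
      · have hD : D = k := by rw [hDdef, min_eq_left h]
        rw [hD]
        linarith [Real.exp_nonneg (-(t*((m:ℝ)-k)))]
      · have hD : (D:ℝ) = (m:ℝ) - k := by
          rw [hDdef, min_eq_right h, Nat.cast_sub hkm]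
        rw [hD]
        linarith [Real.exp_nonneg (-(t*(k:ℝ)))]
    calc ‖∏ i, ((1 - (τ i:ℂ)) + τ i * ζ ^ k)‖
        ≤ Real.exp ((n:ℝ) * (-(5/36) * (1 - Real.cos θ))) := h2
      _ ≤ Real.exp (-(t*D)^2) := h5
      _ ≤ 3 * Real.exp (-(t*(D:ℝ))) := h6
      _ ≤ 3 * (Real.exp (-(t*k)) + Real.exp (-(t*((m:ℝ)-k)))) := by linarith
  -- geometric sums
  set r : ℝ := Real.exp (-t) with hrdef
  have hr0 : 0 < r := Real.exp_pos _
  have hr1 : r < 1 := Real.exp_lt_one_iff.mpr (by linarith)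
  have hgeo : ∑ k ∈ Finset.range m, r^k ≤ 1/(1-r) := by
    rw [geom_sum_eq (ne_of_lt hr1)]
    have he : (r^m - 1)/(r-1) = (1 - r^m)/(1-r) := by
      rw [div_eq_div_iff (by linarith) (by linarith)]; ring
    rw [he, div_le_div_iff₀ (by linarith) (by linarith)]
    nlinarith [pow_nonneg hr0.le m]
  have hsum1 : ∑ k ∈ Finset.range m, Real.exp (-(t*k)) ≤ 1/(1-r) := by
    have he : ∀ k ∈ Finset.range m, Real.exp (-(t*(k:ℝ))) = r^k := by
      intro k _
      rw [hrdef, ← Real.exp_nat_mul]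
      congr 1; ring
    rw [Finset.sum_congr rfl he]
    exact hgeo
  have hsum2 : ∑ k ∈ Finset.range m, Real.exp (-(t*((m:ℝ)-k))) ≤ 1/(1-r) := by
    have he : ∀ k ∈ Finset.range m, Real.exp (-(t*((m:ℝ)-k))) = r^(m-1-k) * r := by
      intro k hk
      have hkm : k < m := Finset.mem_range.mp hk
      rw [hrdef, ← Real.exp_nat_mul, ← Real.exp_add]
      congr 1
      have : ((m-1-k : ℕ):ℝ) = (m:ℝ) - 1 - k := by
        have h1 : 1 + k ≤ m := by omega
        push_cast [Nat.cast_sub (by omega : k ≤ m - 1), Nat.cast_sub (by omega : 1 ≤ m)]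
        ring
      rw [this]; ring
    rw [Finset.sum_congr rfl he]
    calc ∑ k ∈ Finset.range m, r^(m-1-k) * r
        = ∑ k ∈ Finset.range m, r^k * r := by
          exact Finset.sum_range_reflect (fun j => r^j * r) m
      _ ≤ ∑ k ∈ Finset.range m, r^k := by
          apply Finset.sum_le_sum
          intro k _
          nlinarith [pow_nonneg hr0.le k]
      _ ≤ 1/(1-r) := hgeo
  have hrt : 1/(1-r) ≤ 1 + 1/t := by
    have hexp : r ≤ 1/(1+t) := by
      rw [hrdef, Real.exp_neg]
      rw [one_div]
      apply inv_anti₀ (by linarith)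
      linarith [Real.add_one_le_exp t]
    have hA : t/(1+t) ≤ 1 - r := by
      have : 1 - 1/(1+t) = t/(1+t) := by field_simp; ring
      linarith [this]
    calc 1/(1-r) ≤ 1/(t/(1+t)) := one_div_le_one_div_of_le (by positivity) hA
      _ = (1+t)/t := one_div_div _ _
      _ = 1 + 1/t := by rw [add_div, div_self (ne_of_gt ht)]; ring
  -- assemble: DFT identity and bound
  have hdft := aux_dft τ s hs hζ0 hprim
  have hcastS : ((S:ℝ):ℂ) = ∑ A ∈ Finset.powersetCard s Finset.univ,
      ∏ i, (if i ∈ A then (τ i:ℂ) else 1 - τ i) := by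
    rw [hSdef]
    push_cast [apply_ite ((↑·) : ℝ → ℂ)]
    rfl
  have hmain : (m:ℝ) * S ≤ 6 * (1 + 1/t) := by
    have h1 : ((m:ℝ) * S : ℝ) = ‖((n:ℂ)+1) * ((S:ℝ):ℂ)‖ := by
      rw [norm_mul, Complex.norm_real, Real.norm_eq_abs, abs_of_nonneg hS0]
      congr 1
      have : ((n:ℂ)+1) = ((m:ℕ):ℂ) := by push_cast [hmdef]; ring
      rw [this, Complex.norm_natCast]
    have h2 : ‖((n:ℂ)+1) * ((S:ℝ):ℂ)‖
        ≤ ∑ k ∈ Finset.range m, ‖(∏ i, ((1 - (τ i:ℂ)) + τ i * ζ ^ k)) * ζ ^ (-((s:ℤ) * k))‖ := by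
      rw [hcastS, hdft]
      exact norm_sum_le _ _
    have h3 : ∀ k ∈ Finset.range m,
        ‖(∏ i, ((1 - (τ i:ℂ)) + τ i * ζ ^ k)) * ζ ^ (-((s:ℤ) * k))‖
          = ‖∏ i, ((1 - (τ i:ℂ)) + τ i * ζ ^ k)‖ := by
      intro k _
      rw [norm_mul, norm_zpow, hζabs, one_zpow, mul_one]
    calc (m:ℝ) * S = ‖((n:ℂ)+1) * ((S:ℝ):ℂ)‖ := h1
      _ ≤ ∑ k ∈ Finset.range m, ‖(∏ i, ((1 - (τ i:ℂ)) + τ i * ζ ^ k)) * ζ ^ (-((s:ℤ) * k))‖ := h2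
      _ = ∑ k ∈ Finset.range m, ‖∏ i, ((1 - (τ i:ℂ)) + τ i * ζ ^ k)‖ := Finset.sum_congr rfl h3
      _ ≤ ∑ k ∈ Finset.range m, 3 * (Real.exp (-(t*k)) + Real.exp (-(t*((m:ℝ)-k)))) :=
          Finset.sum_le_sum boundk
      _ = 3 * ((∑ k ∈ Finset.range m, Real.exp (-(t*k))) + ∑ k ∈ Finset.range m, Real.exp (-(t*((m:ℝ)-k)))) := by
          rw [← Finset.sum_add_distrib, Finset.mul_sum]
      _ ≤ 3 * (1/(1-r) + 1/(1-r)) := by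
          apply mul_le_mul_of_nonneg_left _ (by norm_num)
          linarith
      _ ≤ 3 * ((1 + 1/t) + (1 + 1/t)) := by
          apply mul_le_mul_of_nonneg_left _ (by norm_num)
          linarith
      _ = 6 * (1 + 1/t) := by ring
  -- final arithmetic
  have hsqn : (0:ℝ) < Real.sqrt n := Real.sqrt_pos.mpr (by exact_mod_cast hn)
  have hS' : S ≤ 6/(m:ℝ) + 6/(t*m) := by
    rw [div_add_div _ _ (ne_of_gt hm0) (ne_of_gt (by positivity : (0:ℝ) < t*m))]
    rw [le_div_iff₀ (by positivity)]
    have : (m:ℝ) * S * t ≤ 6 * (1 + 1/t) * t := by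
      apply mul_le_mul_of_nonneg_right hmain (le_of_lt ht)
    have he : 6 * (1 + 1/t) * t = 6*t + 6 := by field_simp
    have he2 : (6 * (t*m) + 6*m) = (6*t + 6) * m := by ring
    calc S * ((m:ℝ) * (t*m)) = ((m:ℝ) * S * t) * m := by ring
      _ ≤ (6 * (1 + 1/t) * t) * m := by nlinarith [hm0]
      _ = (6*t + 6) * m := by rw [he]
      _ = 6 * (t*(m:ℝ)) + (m:ℝ)*6 := by ring
  have h1 : 6/(t*m) ≤ 6/Real.sqrt n := by
    apply div_le_div_of_nonneg_left (by norm_num) hsqn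
    rw [htm]
    apply Real.sqrt_le_sqrt
    nlinarith [Nat.cast_nonneg (α := ℝ) n]
  have h2 : 6/(m:ℝ) ≤ 6/Real.sqrt n := by
    apply div_le_div_of_nonneg_left (by norm_num) hsqn
    have hn1 : (1:ℝ) ≤ (n:ℝ) := by exact_mod_cast hn
    calc Real.sqrt n ≤ Real.sqrt ((n:ℝ)^2) := Real.sqrt_le_sqrt (by nlinarith)
      _ = (n:ℝ) := Real.sqrt_sq (Nat.cast_nonneg n)
      _ ≤ (m:ℝ) := by rw [hmdef]; push_cast; linarith
  calc S ≤ 6/(m:ℝ) + 6/(t*m) := hS'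
    _ ≤ 6/Real.sqrt n + 6/Real.sqrt n := by linarith
    _ = 12/Real.sqrt n := by ring


lemma partA {n : ℕ} (τ : Fin n → ℝ) (hτ : ∀ i, 1 / 6 ≤ τ i ∧ τ i ≤ 5 / 6)
    {Ω : Type} [MeasurableSpace Ω] (P : Measure Ω) [IsProbabilityMeasure P]
    (X : Fin n → Ω → ℕ) (hmX : ∀ i, Measurable (X i)) (hb : ∀ i ω, X i ω ≤ 1)
    (hp : ∀ i, P {ω | X i ω = 1} = ENNReal.ofReal (τ i))
    (hind : iIndepFun X P) (s : ℕ) :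
    (P {ω | ∑ i, X i ω = s}).toReal
      = ∑ A ∈ Finset.powersetCard s Finset.univ, ∏ i, (if i ∈ A then τ i else 1 - τ i) := by
  classical
  set T : Finset (Fin n) → Set Ω :=
    fun A => ⋂ i, (X i) ⁻¹' {if i ∈ A then 1 else 0} with hTdef
  have hTmeas : ∀ A, MeasurableSet (T A) :=
    fun A => MeasurableSet.iInter fun i => (hmX i) (measurableSet_singleton _)
  have hunion : {ω | ∑ i, X i ω = s} = ⋃ A ∈ Finset.powersetCard s Finset.univ, T A := by
    ext ω
    simp only [Set.mem_setOf_eq, Set.mem_iUnion, hTdef, Set.mem_iInter, Set.mem_preimage,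
      Set.mem_singleton_iff, Finset.mem_powersetCard]
    constructor
    · intro h
      refine ⟨Finset.univ.filter (fun i => X i ω = 1), ⟨Finset.filter_subset _ _, ?_⟩, ?_⟩
      · rw [← h, Finset.card_filter]
        refine Finset.sum_congr rfl fun i _ => ?_
        have := hb i ω
        interval_cases h' : X i ω <;> simp
      · intro i
        by_cases h1 : X i ω = 1
        · simp [h1]
        · have := hb i ω
          have h0 : X i ω = 0 := by omega
          simp [h0, h1]
    · rintro ⟨A, ⟨_, hcard⟩, hω⟩
      rw [Finset.sum_congr rfl (fun i _ => hω i)]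
      simp [Finset.sum_ite_mem, hcard]
  have hdisj : (↑(Finset.powersetCard s (Finset.univ : Finset (Fin n))) : Set (Finset (Fin n))).PairwiseDisjoint T := by
    intro A _ B _ hAB
    rw [Function.onFun, Set.disjoint_left]
    intro ω hA hB
    simp only [hTdef, Set.mem_iInter, Set.mem_preimage, Set.mem_singleton_iff] at hA hB
    have key : ∀ (C : Finset (Fin n)), (∀ j, X j ω = if j ∈ C then 1 else 0) →
        ∀ j, (j ∈ C ↔ X j ω = 1) := by
      intro C hC j; by_cases hj : j ∈ C <;> simp [hC j, hj]
    apply hAB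
    ext i
    rw [key A hA i]
    exact (key B hB i).symm
  have hTA : ∀ A, P (T A) = ∏ i, (if i ∈ A then ENNReal.ofReal (τ i) else 1 - ENNReal.ofReal (τ i)) := by
    intro A
    rw [hTdef]
    rw [hind.meas_iInter (fun i => ⟨{if i ∈ A then 1 else 0}, measurableSet_singleton _, rfl⟩)]
    refine Finset.prod_congr rfl fun i _ => ?_
    by_cases hi : i ∈ A
    · simp only [hi, if_true]
      rw [← hp i]
      congr 1
    · simp only [hi, if_false]
      have hc : (X i)⁻¹' {0} = ((X i)⁻¹' {1})ᶜ := by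
        ext ω
        have := hb i ω
        simp only [Set.mem_preimage, Set.mem_singleton_iff, Set.mem_compl_iff]
        omega
      rw [hc, measure_compl ((hmX i) (measurableSet_singleton _)) (measure_ne_top P _),
        measure_univ, ← hp i]
      congr 1
  rw [hunion, measure_biUnion_finset hdisj (fun A _ => hTmeas A)]
  rw [Finset.sum_congr rfl (fun A _ => hTA A)]
  have hfac : ∀ (A : Finset (Fin n)) i,
      (if i ∈ A then ENNReal.ofReal (τ i) else 1 - ENNReal.ofReal (τ i)) ≠ ⊤ := by
    intro A i
    by_cases hi : i ∈ A
    · simp [hi]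
    · simp only [hi, if_false]
      exact ENNReal.sub_ne_top (by simp)
  rw [ENNReal.toReal_sum (fun A _ => ENNReal.prod_ne_top (fun i _ => hfac A i))]
  refine Finset.sum_congr rfl fun A _ => ?_
  rw [ENNReal.toReal_prod]
  refine Finset.prod_congr rfl fun i _ => ?_
  by_cases hi : i ∈ A
  · simp only [hi, if_true]
    exact ENNReal.toReal_ofReal (by linarith [(hτ i).1])
  · simp only [hi, if_false]
    rw [ENNReal.toReal_sub_of_le (by
        apply ENNReal.ofReal_le_one.mpr
        linarith [(hτ i).2]) (by simp)]
    rw [ENNReal.toReal_ofReal (by linarith [(hτ i).1])]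
    simp



/-- Point-probability bound for sums of independent Poisson trials (Sudholt–Witt): there is a
constant `C > 0`, independent of `n` and of the success probabilities `τ i ∈ [1/6, 5/6]`, such
that for every `s ∈ {0, …, n}` the sum `S` of the `n` independent trials satisfies
`Pr[S = s] ≤ C/√n`. -/
theorem poisson_trials_point_probability :
    ∃ C : ℝ, 0 < C ∧
      ∀ (n : ℕ), 0 < n → ∀ (τ : Fin n → ℝ), (∀ i, 1 / 6 ≤ τ i ∧ τ i ≤ 5 / 6) →
      ∀ (Ω : Type) (_ : MeasurableSpace Ω) (P : Measure Ω), IsProbabilityMeasure P →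
      ∀ (X : Fin n → Ω → ℕ), (∀ i, Measurable (X i)) →
      (∀ i ω, X i ω ≤ 1) →
      (∀ i, P {ω | X i ω = 1} = ENNReal.ofReal (τ i)) →
      iIndepFun X P →
      ∀ s : ℕ, s ≤ n →
      (P {ω | ∑ i, X i ω = s}).toReal ≤ C / Real.sqrt n := by
  refine ⟨12, by norm_num, ?_⟩
  intro n hn τ hτ Ω mΩ P hP X hmX hb hp hind s hs
  letI := mΩ
  haveI := hP
  rw [partA τ hτ P X hmX hb hp hind s]
  exact partB hn τ hτ s hs
end
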